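/- Let [a,b] be a closed bounded interval, X a Banach space, and f : [a,b] → X Bochner integrable. Then there exists a sequence of subdivisions (t_k^i)_{0 ≤ i ≤ i_k} of [a,b] with mesh tending to 0 such that ∑_{i=1}^{i_k} ‖(t_k^i - t_k^{i-1}) f(t_k^i) - ∫_{t_k^{i-1}}^{t_k^i} f(t) dt‖ → 0, and in particular the Riemann sums ∑_{i=1}^{i_k} (t_k^i - t_k^{i-1}) f(t_k^i) converge strongly in X to ∫_a^b f(t) dt. -/

import Mathlib

open MeasureTheory Set Filter Topology
open scoped ENNReal NNReal

lemma mp_subleft (y : ℝ) : MeasurePreserving (fun u : ℝ => y - u) volume volume := by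
  have : (fun u : ℝ => y - u) = (fun v : ℝ => v + y) ∘ (fun u : ℝ => -u) := by
    funext u; simp [sub_eq_add_neg, add_comm]
  rw [this]
  exact (measurePreserving_add_right volume y).comp (Measure.measurePreserving_neg volume)

lemma mp_subright (u : ℝ) : MeasurePreserving (fun y : ℝ => y - u) volume volume := by
  have : (fun y : ℝ => y - u) = (fun y : ℝ => y + (-u)) := by
    funext y; ring
  rw [this]
  exact measurePreserving_add_right volume (-u)

lemma mp_addright (c : ℝ) : MeasurePreserving (fun h : ℝ => h + c) volume volume :=
  measurePreserving_add_right volume c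

lemma trans_cont {X : Type*} [NormedAddCommGroup X]
    (g : ℝ → X) (hg : Integrable g (volume : Measure ℝ)) :
    Tendsto (fun u : ℝ => (∫⁻ y, ‖g y - g (y - u)‖₊ ∂(volume : Measure ℝ)).toReal)
      (𝓝 0) (𝓝 0) := by
  have hmem : MemLp g 1 (volume : Measure ℝ) := memLp_one_iff_integrable.2 hg
  set F : Lp X 1 (volume : Measure ℝ) := hmem.toLp g with hF
  set τ : ℝ → C(ℝ, ℝ) := fun u => ⟨fun y => y - u, by fun_prop⟩ with hτdef
  have hτ : ∀ u : ℝ, MeasurePreserving (τ u) (volume : Measure ℝ) volume := by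
    intro u
    simpa [hτdef, sub_eq_add_neg] using measurePreserving_add_right (volume : Measure ℝ) (-u)
  have hτcont : Continuous τ := by
    apply ContinuousMap.continuous_of_continuous_uncurry
    simp only [hτdef, ContinuousMap.coe_mk, Function.uncurry]
    fun_prop
  set T : ℝ → Lp X 1 (volume : Measure ℝ) := fun u => Lp.compMeasurePreserving (τ u) (hτ u) F
    with hT
  have hT0 : T 0 = F := by
    apply Lp.ext  -- maybe wrong name
    filter_upwards [Lp.coeFn_compMeasurePreserving F (hτ 0)] with y hy
    rw [hy]
    simp [hτdef]
  have htend : Tendsto (fun u => ‖T u - F‖) (𝓝 0) (𝓝 0) := by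
    have h1 : Tendsto T (𝓝 0) (𝓝 (T 0)) := by
      apply Filter.Tendsto.compMeasurePreservingLp tendsto_const_nhds
        (hτcont.tendsto 0) hτ (hτ 0) ENNReal.one_ne_top
    rw [hT0] at h1
    have h2 : Tendsto (fun u => T u - F) (𝓝 0) (𝓝 0) := by
      simpa using h1.sub (tendsto_const_nhds (x := F))
    simpa using h2.norm
  have key : ∀ u : ℝ, (∫⁻ y, ‖g y - g (y - u)‖₊ ∂(volume : Measure ℝ)).toReal = ‖T u - F‖ := by
    intro u
    rw [norm_sub_rev, Lp.norm_def, eLpNorm_one_eq_lintegral_enorm]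
    congr 1
    apply lintegral_congr_ae
    have h1 : ⇑(F - T u) =ᵐ[volume] ⇑F - ⇑(T u) := Lp.coeFn_sub F (T u)
    have h2 : ⇑F =ᵐ[volume] g := hmem.coeFn_toLp
    have h3 : ⇑(T u) =ᵐ[volume] ⇑F ∘ (τ u) := Lp.coeFn_compMeasurePreserving F (hτ u)
    have h4 : ⇑F ∘ (τ u) =ᵐ[volume] g ∘ (τ u) :=
      (hτ u).quasiMeasurePreserving.ae_eq_comp h2
    filter_upwards [h1, h2, h3, h4] with y hy1 hy2 hy3 hy4
    simp only [Pi.sub_apply] at hy1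
    rw [hy1, hy2, hy3, hy4]
    simp [hτdef, Function.comp]
    rfl
  simp only [key]
  exact htend

section helpers
variable {X : Type*} [NormedAddCommGroup X] [NormedSpace ℝ X] [CompleteSpace X]

lemma est (g : ℝ → X) (hg : Integrable g (volume : Measure ℝ)) (hgm : StronglyMeasurable g)
    (y dd ℓ : ℝ) (h0 : 0 < dd) (hdd : dd ≤ ℓ) :
    (‖dd • g y - ∫ s in Ioc (y - dd) y, g s‖₊ : ℝ≥0∞)
      ≤ ∫⁻ u in Ioc 0 ℓ, (‖g y - g (y - u)‖₊ : ℝ≥0∞) := by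
  have h1 : dd • g y = ∫ _ in Ioc (y - dd) y, g y := by
    rw [setIntegral_const, measureReal_def, Real.volume_Ioc]
    norm_num [ENNReal.toReal_ofReal h0.le]
  have h2 : (‖dd • g y - ∫ s in Ioc (y - dd) y, g s‖₊ : ℝ≥0∞)
      = ‖∫ s in Ioc (y - dd) y, (g y - g s)‖₊ := by
    rw [h1, ← integral_sub (show IntegrableOn (fun _ : ℝ => g y) (Ioc (y - dd) y) volume from
        integrableOn_const measure_Ioc_lt_top.ne enorm_ne_top)
      hg.integrableOn]
  rw [h2]
  calc (‖∫ s in Ioc (y - dd) y, (g y - g s)‖₊ : ℝ≥0∞)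
      ≤ ∫⁻ s in Ioc (y - dd) y, ‖g y - g s‖₊ :=
        enorm_integral_le_lintegral_enorm _
    _ = ∫⁻ u in (fun u : ℝ => y - u) ⁻¹' (Ioc (y - dd) y), ‖g y - g (y - u)‖₊ :=
        ((mp_subleft y).setLIntegral_comp_preimage measurableSet_Ioc
          (stronglyMeasurable_const.sub hgm).enorm).symm
    _ = ∫⁻ u in Ico 0 dd, ‖g y - g (y - u)‖₊ := by
        have hset : (fun u : ℝ => y - u) ⁻¹' (Ioc (y - dd) y) = Ico 0 dd := by
          ext u
          simp only [mem_preimage, mem_Ioc, mem_Ico]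
          constructor
          · rintro ⟨hu1, hu2⟩; constructor <;> linarith
          · rintro ⟨hu1, hu2⟩; constructor <;> linarith
        rw [hset]
    _ = ∫⁻ u in Ioo 0 dd, ‖g y - g (y - u)‖₊ := by
        rw [setLIntegral_congr (Ioo_ae_eq_Ico (μ := (volume : Measure ℝ))).symm]
    _ ≤ ∫⁻ u in Ioc 0 ℓ, ‖g y - g (y - u)‖₊ := by
        apply lintegral_mono' (Measure.restrict_mono ?_ le_rfl) le_rfl
        exact fun u hu => ⟨hu.1, hu.2.le.trans hdd⟩

set_option maxHeartbeats 1000000 in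
lemma key (a b : ℝ) (hab : a < b) (f : ℝ → X)
    (hf : IntegrableOn f (Icc a b) volume) (δ ε : ℝ) (hδ : 0 < δ) (hε : 0 < ε) :
    ∃ (m : ℕ) (t : ℕ → ℝ), 1 ≤ m ∧ t 0 = a ∧ t m = b ∧
      (∀ i < m, t i < t (i + 1)) ∧ (∀ i < m, t (i + 1) - t i < δ) ∧
      ∑ i ∈ Finset.range m,
        ‖(t (i + 1) - t i) • f (t (i + 1)) - ∫ s in Ioc (t i) (t (i + 1)), f s‖ < ε := by
  classical
  set f₁ : ℝ → X := (Icc a b).indicator f with hf₁def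
  have hf₁ : Integrable f₁ (volume : Measure ℝ) :=
    (integrable_indicator_iff measurableSet_Icc).2 hf
  set g : ℝ → X := hf₁.1.mk f₁ with hgdef
  have hgm : StronglyMeasurable g := hf₁.1.stronglyMeasurable_mk
  have hfg : f₁ =ᵐ[volume] g := hf₁.1.ae_eq_mk
  have hg : Integrable g (volume : Measure ℝ) := hf₁.congr hfg
  -- translation threshold
  obtain ⟨l₀, hl₀pos, hl₀⟩ : ∃ l₀ > (0:ℝ), ∀ u : ℝ, 0 < u → u ≤ l₀ →
      (∫⁻ y, (‖g y - g (y - u)‖₊ : ℝ≥0∞)) ≤ ENNReal.ofReal (ε / 4) := by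
    have htc := trans_cont g hg
    rw [Metric.tendsto_nhds_nhds] at htc
    obtain ⟨l₀, hl₀pos, H⟩ := htc (ε / 4) (by positivity)
    refine ⟨l₀ / 2, by positivity, fun u hu hu' => ?_⟩
    have hfin : (∫⁻ y, (‖g y - g (y - u)‖₊ : ℝ≥0∞)) ≠ ∞ := by
      have hint : Integrable (fun y => g y - g (y - u)) (volume : Measure ℝ) :=
        hg.sub (memLp_one_iff_integrable.1
          ((memLp_one_iff_integrable.2 hg).comp_measurePreserving (mp_subright u)))
      exact hint.2.ne
    have hd : dist u 0 < l₀ := by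
      rw [Real.dist_eq, sub_zero, abs_of_pos hu]; linarith
    have hH := H hd
    rw [Real.dist_eq, sub_zero] at hH
    rw [ENNReal.le_ofReal_iff_toReal_le hfin (by positivity)]
    have habs := le_abs_self ((∫⁻ y, (‖g y - g (y - u)‖₊ : ℝ≥0∞)).toReal)
    linarith [(abs_lt.1 hH).2]
  -- absolute continuity threshold
  obtain ⟨η, hη, hηs⟩ := exists_pos_setLIntegral_lt_of_measure_lt
    (f := fun y => (‖g y‖₊ : ℝ≥0∞)) (μ := (volume : Measure ℝ)) hg.2.ne
    (ε := ENNReal.ofReal (ε / 4))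
    (by simp [ENNReal.ofReal_eq_zero]; positivity)
  -- a real-valued measure threshold
  obtain ⟨η', hη'pos, hη'⟩ : ∃ η' : ℝ, 0 < η' ∧ ENNReal.ofReal η' < η := by
    rcases eq_or_ne η ⊤ with h | h
    · exact ⟨1, one_pos, by simp [h]⟩
    · refine ⟨η.toReal / 2, ?_, ?_⟩
      · have : 0 < η.toReal := ENNReal.toReal_pos hη.ne' h
        linarith
      · rw [ENNReal.ofReal_lt_iff_lt_toReal (by positivity) h]
        have : 0 < η.toReal := ENNReal.toReal_pos hη.ne' h
        linarith
  -- choose the number of intervals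
  set c : ℝ := min δ (min l₀ (min η' (ε / (4 * (‖f b‖ + 1))))) with hcdef
  have hcpos : 0 < c := by
    have : 0 < ε / (4 * (‖f b‖ + 1)) := by positivity
    simp only [hcdef, lt_min_iff]
    exact ⟨hδ, hl₀pos, hη'pos, this⟩
  obtain ⟨n, hn⟩ : ∃ n : ℕ, (b - a) / c < n := exists_nat_gt ((b - a) / c)
  have hbapos : 0 < b - a := sub_pos.2 hab
  have hnpos : 0 < (n : ℝ) := lt_trans (by positivity) hn
  have hn0 : (n : ℝ) ≠ 0 := hnpos.ne'
  set ℓ : ℝ := (b - a) / n with hℓdef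
  have hℓpos : 0 < ℓ := by positivity
  have hℓc : ℓ < c := by
    rw [hℓdef, div_lt_iff₀ hnpos, mul_comm]
    exact (div_lt_iff₀ hcpos).1 hn
  have hℓδ : ℓ < δ := lt_of_lt_of_le hℓc (min_le_left _ _)
  have hℓl₀ : ℓ < l₀ := lt_of_lt_of_le hℓc ((min_le_right _ _).trans (min_le_left _ _))
  have hℓη' : ℓ < η' := lt_of_lt_of_le hℓc
    ((min_le_right _ _).trans ((min_le_right _ _).trans (min_le_left _ _)))
  have hℓfb : ℓ < ε / (4 * (‖f b‖ + 1)) := lt_of_lt_of_le hℓc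
    ((min_le_right _ _).trans ((min_le_right _ _).trans (min_le_right _ _)))
  have hnℓ : (n : ℝ) * ℓ = b - a := by rw [hℓdef]; field_simp
  have hn1 : 1 ≤ n := by exact_mod_cast Nat.one_le_cast.2 (by exact_mod_cast Nat.pos_of_ne_zero (by exact_mod_cast fun h => hn0 (by simp [h])))
  -- the shifted difference kernel
  set D : ℝ → ℝ → ℝ≥0∞ := fun y u => (‖g y - g (y - u)‖₊ : ℝ≥0∞) with hDdef
  have hD : Measurable (Function.uncurry D) := by
    have h1 : StronglyMeasurable (fun p : ℝ × ℝ => g p.1 - g (p.1 - p.2)) :=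
      (hgm.comp_measurable measurable_fst).sub
        (hgm.comp_measurable (measurable_fst.sub measurable_snd))
    exact h1.enorm
  set G : ℝ → ℝ≥0∞ := fun h =>
    ∑ i ∈ Finset.range n, ∫⁻ u in Ioc 0 ℓ, D (h + (a + (i:ℝ) * ℓ)) u with hGdef
  have hGi : ∀ i : ℕ, Measurable (fun h : ℝ => ∫⁻ u in Ioc 0 ℓ, D (h + (a + (i:ℝ) * ℓ)) u) := by
    intro i
    exact Measurable.lintegral_prod_right'
      (f := fun p : ℝ × ℝ => D (p.1 + (a + (i:ℝ) * ℓ)) p.2)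
      (hD.comp ((measurable_fst.add_const _).prodMk measurable_snd))
  have hGmeas : Measurable G := Finset.measurable_sum _ fun i _ => hGi i
  -- the average bound
  have havg : (∫⁻ h in Ioo 0 ℓ, G h) ≤ ENNReal.ofReal (ε / 4) * ENNReal.ofReal ℓ := by
    rw [hGdef, lintegral_finset_sum _ fun i _ => hGi i]
    have hswap : ∀ i : ℕ,
        (∫⁻ h in Ioo 0 ℓ, ∫⁻ u in Ioc 0 ℓ, D (h + (a + (i:ℝ) * ℓ)) u)
          = ∫⁻ u in Ioc 0 ℓ, ∫⁻ h in Ioo 0 ℓ, D (h + (a + (i:ℝ) * ℓ)) u := by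
      intro i
      exact lintegral_lintegral_swap
        ((hD.comp ((measurable_fst.add_const _).prodMk measurable_snd)).aemeasurable)
    simp only [hswap]
    have hsum2 : (∫⁻ u in Ioc 0 ℓ, ∑ i ∈ Finset.range n,
          ∫⁻ h in Ioo 0 ℓ, D (h + (a + (i:ℝ) * ℓ)) u)
        = ∑ i ∈ Finset.range n, ∫⁻ u in Ioc 0 ℓ, ∫⁻ h in Ioo 0 ℓ, D (h + (a + (i:ℝ) * ℓ)) u :=
      lintegral_finset_sum _ (fun i _ => (Measurable.lintegral_prod_right'
        (f := fun p : ℝ × ℝ => D (p.2 + (a + (i:ℝ) * ℓ)) p.1)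
        (hD.comp ((measurable_snd.add_const _).prodMk measurable_fst))))
    rw [← hsum2]
    have hpt : ∀ u ∈ Ioc (0:ℝ) ℓ,
        (∑ i ∈ Finset.range n, ∫⁻ h in Ioo 0 ℓ, D (h + (a + (i:ℝ) * ℓ)) u)
          ≤ ENNReal.ofReal (ε / 4) := by
      intro u hu
      have hDu : Measurable fun y => D y u :=
        hD.comp (measurable_id.prodMk measurable_const)
      have hsub : ∀ i : ℕ, (∫⁻ h in Ioo 0 ℓ, D (h + (a + (i:ℝ) * ℓ)) u)
          = ∫⁻ y in Ioo (a + (i:ℝ) * ℓ) (a + (i:ℝ) * ℓ + ℓ), D y u := by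
        intro i
        have hpre : (fun h : ℝ => h + (a + (i:ℝ) * ℓ)) ⁻¹'
            (Ioo (a + (i:ℝ) * ℓ) (a + (i:ℝ) * ℓ + ℓ)) = Ioo 0 ℓ := by
          ext h
          simp only [mem_preimage, mem_Ioo]
          constructor
          · rintro ⟨h1, h2⟩; constructor <;> linarith
          · rintro ⟨h1, h2⟩; constructor <;> linarith
        rw [← hpre]
        exact (mp_addright (a + (i:ℝ) * ℓ)).setLIntegral_comp_preimage
          measurableSet_Ioo hDu
      simp only [hsub]
      have hdisj : Set.PairwiseDisjoint (↑(Finset.range n))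
          (fun i : ℕ => Ioo (a + (i:ℝ) * ℓ) (a + (i:ℝ) * ℓ + ℓ)) := by
        intro i _ j _ hij
        simp only [Function.onFun]
        rcases lt_or_gt_of_ne hij with h | h
        · have hcast : ((i:ℝ) + 1) ≤ (j:ℝ) := by exact_mod_cast Nat.succ_le_of_lt h
          rw [Set.disjoint_left]
          rintro x ⟨_, hx2⟩ ⟨hx3, _⟩
          have : (i:ℝ) * ℓ + ℓ ≤ (j:ℝ) * ℓ := by
            have h2 := mul_le_mul_of_nonneg_right hcast hℓpos.le
            rw [add_mul, one_mul] at h2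
            linarith
          linarith
        · have hcast : ((j:ℝ) + 1) ≤ (i:ℝ) := by exact_mod_cast Nat.succ_le_of_lt h
          rw [Set.disjoint_left]
          rintro x ⟨hx1, _⟩ ⟨_, hx4⟩
          have : (j:ℝ) * ℓ + ℓ ≤ (i:ℝ) * ℓ := by
            have h2 := mul_le_mul_of_nonneg_right hcast hℓpos.le
            rw [add_mul, one_mul] at h2
            linarith
          linarith
      calc (∑ i ∈ Finset.range n,
            ∫⁻ y in Ioo (a + (i:ℝ) * ℓ) (a + (i:ℝ) * ℓ + ℓ), D y u)
          = ∫⁻ y in ⋃ i ∈ Finset.range n,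
              Ioo (a + (i:ℝ) * ℓ) (a + (i:ℝ) * ℓ + ℓ), D y u :=
            (lintegral_biUnion_finset hdisj (fun i _ => measurableSet_Ioo) _).symm
        _ ≤ ∫⁻ y, D y u := lintegral_mono' Measure.restrict_le_self le_rfl
        _ ≤ ENNReal.ofReal (ε / 4) := hl₀ u hu.1 (hu.2.trans hℓl₀.le)
    calc (∫⁻ u in Ioc 0 ℓ, ∑ i ∈ Finset.range n,
          ∫⁻ h in Ioo 0 ℓ, D (h + (a + (i:ℝ) * ℓ)) u)
        ≤ ∫⁻ _ in Ioc (0:ℝ) ℓ, ENNReal.ofReal (ε / 4) :=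
          setLIntegral_mono measurable_const hpt
      _ = ENNReal.ofReal (ε / 4) * ENNReal.ofReal ℓ := by
          rw [setLIntegral_const, Real.volume_Ioc, sub_zero]
  -- the bad null set
  set N : Set ℝ := {y | f₁ y ≠ g y} with hNdef
  have hN : volume N = 0 := hfg
  set B : Set ℝ := ⋃ i ∈ Finset.range n, (fun h : ℝ => h + (a + (i:ℝ) * ℓ)) ⁻¹' N with hBdef
  have hB : volume B = 0 := by
    rw [hBdef]
    refine (measure_biUnion_null_iff (Finset.range n).countable_toSet).2 fun i _ => ?_
    exact (mp_addright (a + (i:ℝ) * ℓ)).quasiMeasurePreserving.preimage_null hN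
  -- extract a good shift h
  have hlt : (∫⁻ h in Ioo 0 ℓ, G h) < ENNReal.ofReal (ε / 2) * ENNReal.ofReal ℓ := by
    refine lt_of_le_of_lt havg ?_
    have h1 : ENNReal.ofReal (ε / 4) < ENNReal.ofReal (ε / 2) :=
      ENNReal.ofReal_lt_ofReal_iff (by positivity) |>.2 (by linarith)
    exact ENNReal.mul_lt_mul_left (ENNReal.ofReal_pos.2 hℓpos).ne'
      ENNReal.ofReal_ne_top h1
  obtain ⟨h, hhmem, hhB, hhG⟩ : ∃ h, h ∈ Ioo (0:ℝ) ℓ ∧ h ∉ B ∧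
      G h < ENNReal.ofReal (ε / 2) := by
    by_contra hcon
    have hsubset : Ioo 0 ℓ \ B ⊆ {x | ENNReal.ofReal (ε / 2) ≤ G x} := by
      intro x hx
      by_contra hxc
      exact hcon ⟨x, hx.1, hx.2, not_le.1 hxc⟩
    have hge : ENNReal.ofReal (ε / 2) * ENNReal.ofReal ℓ ≤ ∫⁻ h in Ioo 0 ℓ, G h := by
      set S : Set ℝ := Ioo 0 ℓ ∩ {x | ENNReal.ofReal (ε / 2) ≤ G x} with hSdef
      have hSmeas : MeasurableSet S :=
        measurableSet_Ioo.inter (measurableSet_le measurable_const hGmeas)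
      have hvol : ENNReal.ofReal ℓ ≤ volume S := by
        have : Ioo 0 ℓ \ B ⊆ S := fun x hx => ⟨hx.1, hsubset hx⟩
        calc ENNReal.ofReal ℓ = volume (Ioo 0 ℓ \ B) := by
              rw [measure_diff_null hB, Real.volume_Ioo, sub_zero]
          _ ≤ volume S := measure_mono this
      calc ENNReal.ofReal (ε / 2) * ENNReal.ofReal ℓ
          ≤ ENNReal.ofReal (ε / 2) * volume S := mul_le_mul_right hvol _
        _ = ∫⁻ _ in S, ENNReal.ofReal (ε / 2) := (setLIntegral_const _ _).symm
        _ ≤ ∫⁻ x in S, G x := setLIntegral_mono hGmeas fun x hx => hx.2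
        _ ≤ ∫⁻ x in Ioo 0 ℓ, G x :=
            lintegral_mono' (Measure.restrict_mono inter_subset_left le_rfl) le_rfl
    exact absurd hge (not_le.2 hlt)
  obtain ⟨hh0, hhℓ⟩ := hhmem
  have hhB' : ∀ i ∈ Finset.range n, f₁ (h + (a + (i:ℝ) * ℓ)) = g (h + (a + (i:ℝ) * ℓ)) := by
    intro i hi
    by_contra hne
    exact hhB (mem_biUnion hi hne)
  -- the subdivision
  set t : ℕ → ℝ := fun j => if j = 0 then a else if j ≤ n then h + (a + ((j:ℝ) - 1) * ℓ) else b
    with htdef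
  have ht0 : t 0 = a := by simp [htdef]
  have htn1 : t (n + 1) = b := by simp [htdef]
  have htval : ∀ j : ℕ, 1 ≤ j → j ≤ n → t j = h + (a + ((j:ℝ) - 1) * ℓ) := by
    intro j hj1 hj2
    simp [htdef, Nat.one_le_iff_ne_zero.1 hj1, hj2]
  have htiv : ∀ i : ℕ, i < n → t (i + 1) = h + (a + (i:ℝ) * ℓ) := by
    intro i hi
    rw [htval (i + 1) (by omega) (by omega)]
    push_cast
    ring_nf
  have hb_eq : b = a + (n:ℝ) * ℓ := by linarith
  have htn : t n = b - ℓ + h := by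
    rw [htval n hn1 le_rfl, hb_eq]
    have : (n:ℝ) - 1 ≥ 0 := by
      have : (1:ℝ) ≤ n := by exact_mod_cast hn1
      linarith
    ring
  have hstep : ∀ i < n + 1, 0 < t (i + 1) - t i ∧ t (i + 1) - t i ≤ ℓ := by
    intro i hi
    by_cases h0 : i = 0
    · subst h0
      rw [ht0, htval 1 le_rfl hn1]
      push_cast
      exact ⟨by linarith, by linarith⟩
    · by_cases h1 : i < n
      · rw [htiv i h1, htval i (by omega) (by omega)]
        push_cast
        exact ⟨by linarith, by linarith⟩
      · have hin : i = n := by omega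
        subst hin
        rw [htn1, htn]
        exact ⟨by linarith, by linarith⟩
  have hrange : ∀ j, j ≤ n + 1 → a ≤ t j ∧ t j ≤ b := by
    intro j hj
    by_cases h0 : j = 0
    · subst h0; rw [ht0]; exact ⟨le_rfl, hab.le⟩
    · by_cases h1 : j ≤ n
      · rw [htval j (by omega) h1]
        have hj1 : (1:ℝ) ≤ (j:ℝ) := by exact_mod_cast Nat.one_le_iff_ne_zero.2 h0
        have hjn : (j:ℝ) ≤ (n:ℝ) := by exact_mod_cast h1
        constructor
        · nlinarith
        · rw [hb_eq]; nlinarith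
      · have : j = n + 1 := by omega
        subst this; rw [htn1]; exact ⟨hab.le, le_rfl⟩
  -- pointwise f = g at sample points, and on intervals
  have hfg_pt : ∀ i < n, f (t (i + 1)) = g (t (i + 1)) := by
    intro i hi
    have hmem : t (i + 1) ∈ Icc a b := by
      have := hrange (i + 1) (by omega)
      exact ⟨this.1, this.2⟩
    rw [htiv i hi]
    rw [← hhB' i (Finset.mem_range.2 hi)]
    rw [hf₁def]
    rw [indicator_of_mem (by rw [← htiv i hi]; exact hmem) f]
  have hint_eq : ∀ i < n + 1, (∫ s in Ioc (t i) (t (i + 1)), f s)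
      = ∫ s in Ioc (t i) (t (i + 1)), g s := by
    intro i hi
    have hsub : Ioc (t i) (t (i + 1)) ⊆ Icc a b := by
      intro s hs
      have h1 := (hrange i (by omega)).1
      have h2 := (hrange (i + 1) (by omega)).2
      exact ⟨h1.trans hs.1.le, hs.2.trans h2⟩
    have e1 : (∫ s in Ioc (t i) (t (i + 1)), f s) = ∫ s in Ioc (t i) (t (i + 1)), f₁ s :=
      setIntegral_congr_fun measurableSet_Ioc fun s hs => by
        rw [hf₁def, indicator_of_mem (hsub hs) f]
    rw [e1]
    exact integral_congr_ae (ae_restrict_of_ae hfg)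
  -- per-term bound
  have hterm : ∀ i < n, (‖(t (i + 1) - t i) • f (t (i + 1))
        - ∫ s in Ioc (t i) (t (i + 1)), f s‖₊ : ℝ≥0∞)
      ≤ ∫⁻ u in Ioc 0 ℓ, D (h + (a + (i:ℝ) * ℓ)) u := by
    intro i hi
    rw [hfg_pt i hi, hint_eq i (by omega)]
    have hst := hstep i (by omega)
    have h1 := est (X := X) g hg hgm (t (i + 1)) (t (i + 1) - t i) ℓ hst.1 hst.2
    rw [show t (i + 1) - (t (i + 1) - t i) = t i from by ring] at h1
    refine le_trans h1 ?_
    simp only [hDdef]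
    rw [htiv i hi]
  -- last term bound
  have hlast : (‖(t (n + 1) - t n) • f (t (n + 1))
        - ∫ s in Ioc (t n) (t (n + 1)), f s‖₊ : ℝ≥0∞)
      ≤ ENNReal.ofReal (ℓ * (‖f b‖ + 1)) + ∫⁻ y in Ioc (b - ℓ) b, (‖g y‖₊ : ℝ≥0∞) := by
    rw [hint_eq n (by omega), htn1]
    calc (‖(b - t n) • f b - ∫ s in Ioc (t n) b, g s‖₊ : ℝ≥0∞)
        ≤ (‖(b - t n) • f b‖₊ : ℝ≥0∞) + ‖∫ s in Ioc (t n) b, g s‖₊ := by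
          exact_mod_cast nnnorm_sub_le _ _
      _ ≤ ENNReal.ofReal (ℓ * (‖f b‖ + 1)) + ∫⁻ y in Ioc (b - ℓ) b, (‖g y‖₊ : ℝ≥0∞) := by
          gcongr
          · rw [show ((‖(b - t n) • f b‖₊ : ℝ≥0∞)) = ENNReal.ofReal ‖(b - t n) • f b‖ by rw [ofReal_norm]; rfl, norm_smul]
            apply ENNReal.ofReal_le_ofReal
            rw [htn, Real.norm_eq_abs]
            have h1 : |b - (b - ℓ + h)| = ℓ - h := by
              rw [abs_of_nonneg] <;> linarith
            rw [h1]
            have := norm_nonneg (f b)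
            nlinarith
          · calc (‖∫ s in Ioc (t n) b, g s‖₊ : ℝ≥0∞)
                ≤ ∫⁻ s in Ioc (t n) b, (‖g s‖₊ : ℝ≥0∞) :=
                  enorm_integral_le_lintegral_enorm _
              _ ≤ ∫⁻ y in Ioc (b - ℓ) b, (‖g y‖₊ : ℝ≥0∞) := by
                  apply lintegral_mono' (Measure.restrict_mono ?_ le_rfl) le_rfl
                  apply Ioc_subset_Ioc_left
                  rw [htn]; linarith
  -- assemble
  refine ⟨n + 1, t, by omega, ht0, htn1, ?_, ?_, ?_⟩
  · intro i hi
    linarith [(hstep i hi).1]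
  · intro i hi
    linarith [(hstep i hi).2, hℓδ]
  · have hsum_eq : (∑ i ∈ Finset.range (n + 1),
        ‖(t (i + 1) - t i) • f (t (i + 1)) - ∫ s in Ioc (t i) (t (i + 1)), f s‖)
        = (∑ i ∈ Finset.range (n + 1), (‖(t (i + 1) - t i) • f (t (i + 1))
            - ∫ s in Ioc (t i) (t (i + 1)), f s‖₊ : ℝ≥0∞)).toReal := by
      rw [ENNReal.toReal_sum fun i _ => ENNReal.coe_ne_top]
      simp [coe_nnnorm]
    rw [hsum_eq]
    have henn : (∑ i ∈ Finset.range (n + 1), (‖(t (i + 1) - t i) • f (t (i + 1))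
        - ∫ s in Ioc (t i) (t (i + 1)), f s‖₊ : ℝ≥0∞)) < ENNReal.ofReal ε := by
      rw [Finset.sum_range_succ]
      have hA : (∑ i ∈ Finset.range n, (‖(t (i + 1) - t i) • f (t (i + 1))
          - ∫ s in Ioc (t i) (t (i + 1)), f s‖₊ : ℝ≥0∞)) < ENNReal.ofReal (ε / 2) := by
        refine lt_of_le_of_lt ?_ hhG
        rw [hGdef]
        exact Finset.sum_le_sum fun i hi => hterm i (Finset.mem_range.1 hi)
      have hL : (‖(t (n + 1) - t n) • f (t (n + 1))
          - ∫ s in Ioc (t n) (t (n + 1)), f s‖₊ : ℝ≥0∞) < ENNReal.ofReal (ε / 2) := by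
        refine lt_of_le_of_lt hlast ?_
        have hX : ENNReal.ofReal (ℓ * (‖f b‖ + 1)) ≤ ENNReal.ofReal (ε / 4) := by
          apply ENNReal.ofReal_le_ofReal
          have hpos : (0:ℝ) < ‖f b‖ + 1 := by positivity
          have h2 : ℓ * (‖f b‖ + 1) < (ε / (4 * (‖f b‖ + 1))) * (‖f b‖ + 1) :=
            mul_lt_mul_of_pos_right hℓfb hpos
          have h3 : (ε / (4 * (‖f b‖ + 1))) * (‖f b‖ + 1) = ε / 4 := by
            field_simp
          linarith
        have hY : (∫⁻ y in Ioc (b - ℓ) b, (‖g y‖₊ : ℝ≥0∞)) < ENNReal.ofReal (ε / 4) := by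
          apply hηs
          rw [Real.volume_Ioc]
          have : b - (b - ℓ) = ℓ := by ring
          rw [this]
          exact lt_trans (ENNReal.ofReal_lt_ofReal_iff hη'pos |>.2 hℓη') hη'
        calc ENNReal.ofReal (ℓ * (‖f b‖ + 1)) + ∫⁻ y in Ioc (b - ℓ) b, (‖g y‖₊ : ℝ≥0∞)
            < ENNReal.ofReal (ε / 4) + ENNReal.ofReal (ε / 4) :=
              ENNReal.add_lt_add_of_le_of_lt ENNReal.ofReal_ne_top hX hY
          _ = ENNReal.ofReal (ε / 2) := by
              rw [← ENNReal.ofReal_add (by positivity) (by positivity)]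
              norm_num
              rw [show ε / 4 + ε / 4 = ε / 2 by ring]
      calc _ < ENNReal.ofReal (ε / 2) + ENNReal.ofReal (ε / 2) := ENNReal.add_lt_add hA hL
        _ = ENNReal.ofReal ε := by
            rw [← ENNReal.ofReal_add (by positivity) (by positivity)]
            norm_num
    exact ENNReal.toReal_lt_of_lt_ofReal henn

end helpers

/-- **Approximation of Bochner integrals by Riemann sums.**
If `f : [a,b] → X` is Bochner integrable with values in a Banach space `X`, there is a
sequence of subdivisions of `[a,b]` with mesh tending to `0` such that
`∑_i ‖(t_k^i - t_k^{i-1}) f(t_k^i) - ∫_{t_k^{i-1}}^{t_k^i} f(t) dt‖ → 0`; in particular the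
right-endpoint Riemann sums converge strongly in `X` to `∫_a^b f(t) dt`. -/
theorem stmt1 {X : Type*} [NormedAddCommGroup X] [NormedSpace ℝ X] [CompleteSpace X]
    (a b : ℝ) (hab : a < b) (f : ℝ → X)
    (hf : IntegrableOn f (Set.Icc a b) volume) :
    ∃ (ik : ℕ → ℕ) (t : ℕ → ℕ → ℝ),
      (∀ k, 1 ≤ ik k) ∧
      (∀ k, t k 0 = a) ∧ (∀ k, t k (ik k) = b) ∧
      (∀ k, ∀ i < ik k, t k i < t k (i + 1)) ∧
      (∀ ε > (0:ℝ), ∃ K : ℕ, ∀ k ≥ K, ∀ i < ik k, t k (i + 1) - t k i < ε) ∧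
      Tendsto
        (fun k => ∑ i ∈ Finset.range (ik k),
          ‖(t k (i + 1) - t k i) • f (t k (i + 1)) -
            ∫ s in Set.Ioc (t k i) (t k (i + 1)), f s‖)
        atTop (𝓝 0) ∧
      Tendsto
        (fun k => ∑ i ∈ Finset.range (ik k), (t k (i + 1) - t k i) • f (t k (i + 1)))
        atTop (𝓝 (∫ s in Set.Icc a b, f s)) := by
  have H : ∀ k : ℕ, ∃ (m : ℕ) (t : ℕ → ℝ), 1 ≤ m ∧ t 0 = a ∧ t m = b ∧
      (∀ i < m, t i < t (i + 1)) ∧ (∀ i < m, t (i + 1) - t i < 1 / (k + 1)) ∧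
      ∑ i ∈ Finset.range m,
        ‖(t (i + 1) - t i) • f (t (i + 1)) - ∫ s in Ioc (t i) (t (i + 1)), f s‖ < 1 / (k + 1) :=
    fun k => key a b hab f hf (1 / (k + 1)) (1 / (k + 1)) (by positivity) (by positivity)
  choose m t hm h0 hb hmono hmesh hsum using H
  -- monotonicity of the subdivision
  have hmon2 : ∀ k, ∀ i j, i ≤ j → j ≤ m k → t k i ≤ t k j := by
    intro k i j hij hjm
    induction j with
    | zero => simp [Nat.le_zero.1 hij]
    | succ j ih =>
      rcases Nat.lt_succ_iff_lt_or_eq.1 (Nat.lt_succ_of_le hij) with hlt | heq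
      · exact (ih (by omega) (by omega)).trans (hmono k j (by omega)).le
      · rw [heq]
  have hrange : ∀ k, ∀ i ≤ m k, a ≤ t k i ∧ t k i ≤ b := by
    intro k i hi
    constructor
    · rw [← h0 k]; exact hmon2 k 0 i (by omega) hi
    · rw [← hb k]; exact hmon2 k i (m k) hi le_rfl
  -- sum of integrals over the pieces
  have hIio : ∀ k, (∑ i ∈ Finset.range (m k), ∫ s in Ioc (t k i) (t k (i + 1)), f s)
      = ∫ s in Icc a b, f s := by
    intro k
    have hii : ∀ i < m k, IntervalIntegrable f volume (t k i) (t k (i + 1)) := by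
      intro i hi
      rw [intervalIntegrable_iff_integrableOn_Ioc_of_le (hmono k i hi).le]
      apply hf.mono_set
      intro s hs
      exact ⟨(hrange k i (by omega)).1.trans hs.1.le, hs.2.trans (hrange k (i + 1) (by omega)).2⟩
    have e1 : ∀ i ∈ Finset.range (m k),
        (∫ s in Ioc (t k i) (t k (i + 1)), f s) = ∫ s in (t k i)..(t k (i + 1)), f s := by
      intro i hi
      rw [intervalIntegral.integral_of_le (hmono k i (Finset.mem_range.1 hi)).le]
    rw [Finset.sum_congr rfl e1, intervalIntegral.sum_integral_adjacent_intervals hii,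
      h0 k, hb k, intervalIntegral.integral_of_le hab.le, integral_Icc_eq_integral_Ioc]
  have hS0 : Tendsto (fun k => ∑ i ∈ Finset.range (m k),
      ‖(t k (i + 1) - t k i) • f (t k (i + 1)) - ∫ s in Ioc (t k i) (t k (i + 1)), f s‖)
      atTop (𝓝 0) := by
    apply squeeze_zero (fun k => Finset.sum_nonneg fun i _ => norm_nonneg _)
      (fun k => (hsum k).le)
    exact tendsto_one_div_add_atTop_nhds_zero_nat
  refine ⟨m, t, hm, h0, hb, hmono, ?_, hS0, ?_⟩
  · intro ε hε
    obtain ⟨K, hK⟩ := exists_nat_one_div_lt hε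
    refine ⟨K, fun k hk i hi => ?_⟩
    have h1 := hmesh k i hi
    have h2 : 1 / ((k:ℝ) + 1) ≤ 1 / ((K:ℝ) + 1) := by
      apply one_div_le_one_div_of_le (by positivity)
      have : (K:ℝ) ≤ k := by exact_mod_cast hk
      linarith
    linarith
  · rw [tendsto_iff_norm_sub_tendsto_zero]
    apply squeeze_zero (fun k => norm_nonneg _) ?_ hS0
    intro k
    have e2 : (∑ i ∈ Finset.range (m k), (t k (i + 1) - t k i) • f (t k (i + 1)))
        - ∫ s in Icc a b, f s
        = ∑ i ∈ Finset.range (m k), ((t k (i + 1) - t k i) • f (t k (i + 1))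
            - ∫ s in Ioc (t k i) (t k (i + 1)), f s) := by
      rw [Finset.sum_sub_distrib, hIio k]
    rw [e2]
    exact norm_sum_le _ _
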